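/- Suppose S is an N×N Hermitian positive semidefinite complex matrix, δ ≥ 0 and γ_1,…,γ_K ≥ 0 are real numbers, and the following KKT conditions hold: (i) primal feasibility: tr(S) ≤ P and h_iᴴ S h_i ≤ Γ_i for all i; (ii) stationarity: det(I + H_sᴴ S H_s) · H_s (I + H_sᴴ S H_s)^{-1} H_sᴴ = δ·I + Σ_{i=1}^K γ_i · h_i h_iᴴ as N×N matrices; (iii) complementary slackness: δ·(tr(S) − P) = 0 and γ_i·(h_iᴴ S h_i − Γ_i) = 0 for all i. Then S is a global maximizer of the (non-convex) problem: for every Hermitian PSD matrix S' with tr(S') ≤ P and h_iᴴ S' h_i ≤ Γ_i for all i, det(I + H_sᴴ S' H_s) ≤ det(I + H_sᴴ S H_s). -/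

import Mathlib

open Matrix ComplexOrder

/-- The (real) quadratic form `hᴴ S h`. -/
noncomputable def quadForm {N : ℕ} (h : Fin N → ℂ) (S : Matrix (Fin N) (Fin N) ℂ) : ℝ :=
  (star h ⬝ᵥ S.mulVec h).re

/-- The (real) value `det(I + Hsᴴ S Hs)`. -/
noncomputable def detVal {N M : ℕ} (Hs : Matrix (Fin N) (Fin M) ℂ)
    (S : Matrix (Fin N) (Fin N) ℂ) : ℝ :=
  ((1 + Hs.conjTranspose * S * Hs).det).re

lemma trace_eq_sum_eig {n : Type*} [Fintype n] [DecidableEq n] {A : Matrix n n ℂ}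
    (hA : A.IsHermitian) : A.trace = ∑ i, (hA.eigenvalues i : ℂ) := by
  nth_rewrite 1 [hA.spectral_theorem]
  rw [Unitary.conjStarAlgAut_apply, Matrix.trace_mul_cycle, Unitary.coe_star_mul_self, Matrix.one_mul,
    Matrix.trace_diagonal]
  simp

open scoped MatrixOrder in
lemma det_le_of_trace_le {n : Type*} [Fintype n] [DecidableEq n] {A B : Matrix n n ℂ}
    (hA : A.PosDef) (hB : B.PosSemidef)
    (htr : ((A⁻¹ * B).trace).re ≤ (Fintype.card n : ℝ)) : B.det.re ≤ A.det.re := by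
  have hAinv : A⁻¹.PosDef := hA.inv
  set Q := CFC.sqrt A⁻¹ with hQdef
  have hQpsd : Q.PosSemidef := (CFC.sqrt_nonneg A⁻¹).posSemidef
  have hQH : Qᴴ = Q := hQpsd.isHermitian
  have hQQ : Q * Q = A⁻¹ := CFC.sqrt_mul_sqrt_self A⁻¹ hAinv.posSemidef.nonneg
  have hC : (Q * B * Q).PosSemidef := by
    have := hB.mul_mul_conjTranspose_same Q; rwa [hQH] at this
  set C := Q * B * Q with hCdef
  have htrC : C.trace = (A⁻¹ * B).trace := by
    rw [hCdef, Matrix.trace_mul_cycle, hQQ]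
  have hdetC : C.det = A⁻¹.det * B.det := by
    rw [hCdef, Matrix.det_mul, Matrix.det_mul, ← hQQ, Matrix.det_mul]; ring
  set μ := hC.isHermitian.eigenvalues with hμdef
  have hμ0 : ∀ i, 0 ≤ μ i := hC.eigenvalues_nonneg
  have hdetC' : C.det = ((∏ i, μ i : ℝ) : ℂ) := by
    rw [hC.isHermitian.det_eq_prod_eigenvalues]; push_cast; rfl
  have htrC' : C.trace = ((∑ i, μ i : ℝ) : ℂ) := by
    rw [trace_eq_sum_eig hC.isHermitian]; push_cast; rfl
  have hsum : ∑ i, μ i ≤ (Fintype.card n : ℝ) := by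
    have := htr; rw [← htrC, htrC'] at this; simpa using this
  have hprod : ∏ i, μ i ≤ 1 := by
    calc ∏ i, μ i ≤ ∏ i, Real.exp (μ i - 1) := by
          refine Finset.prod_le_prod (fun i _ => hμ0 i) (fun i _ => ?_)
          have := Real.add_one_le_exp (μ i - 1); linarith
      _ = Real.exp (∑ i, (μ i - 1)) := (Real.exp_sum _ _).symm
      _ ≤ 1 := by
          rw [Real.exp_le_one_iff]
          rw [Finset.sum_sub_distrib]
          simp only [Finset.sum_const, Finset.card_univ, nsmul_eq_mul, mul_one]
          linarith
  have hdet0 : A.det ≠ 0 := ne_of_gt hA.det_pos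
  have hBdet : B.det = A.det * C.det := by
    rw [hdetC, Matrix.det_nonsing_inv, Ring.inverse_eq_inv]
    field_simp
  have hAre : A.det = ((A.det.re : ℝ) : ℂ) := by
    have h := hA.det_pos
    rw [Complex.lt_def] at h
    exact Complex.ext rfl (by simpa using h.2.symm)
  have hApos : 0 < A.det.re := by
    have h := hA.det_pos; rw [Complex.lt_def] at h; simpa using h.1
  have : B.det.re = A.det.re * ∏ i, μ i := by
    rw [hBdet, hdetC']
    nth_rewrite 1 [hAre]
    rw [← Complex.ofReal_mul, Complex.ofReal_re]
  rw [this]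
  nlinarith [hApos, hprod]

lemma trace_vecMulVec_mul {n : ℕ} (u v : Fin n → ℂ) (T : Matrix (Fin n) (Fin n) ℂ) :
    (Matrix.vecMulVec u v * T).trace = v ⬝ᵥ (T *ᵥ u) := by
  simp only [Matrix.trace, Matrix.diag, Matrix.mul_apply, Matrix.vecMulVec_apply,
    dotProduct, Matrix.mulVec, Finset.mul_sum]
  rw [Finset.sum_comm]
  exact Finset.sum_congr rfl fun k _ => Finset.sum_congr rfl fun j _ => by ring

theorem stmt_13 (N M K : ℕ) (hN : 0 < N) (hM : 0 < M) (hK : 0 < K)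
    (P : ℝ) (hP : 0 < P) (Γ : Fin K → ℝ) (hΓ : ∀ i, 0 ≤ Γ i)
    (Hs : Matrix (Fin N) (Fin M) ℂ) (h : Fin K → Fin N → ℂ)
    (S : Matrix (Fin N) (Fin N) ℂ) (δ : ℝ) (γ : Fin K → ℝ)
    (hδ : 0 ≤ δ) (hγ : ∀ i, 0 ≤ γ i)
    -- (i) primal feasibility
    (hS : S.PosSemidef) (htr : S.trace.re ≤ P) (hit : ∀ i, quadForm (h i) S ≤ Γ i)
    -- (ii) stationarity
    (hstat : (1 + Hs.conjTranspose * S * Hs).det •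
        (Hs * (1 + Hs.conjTranspose * S * Hs)⁻¹ * Hs.conjTranspose) =
      (δ : ℂ) • (1 : Matrix (Fin N) (Fin N) ℂ) +
        ∑ i : Fin K, (γ i : ℂ) • Matrix.vecMulVec (h i) (star (h i)))
    -- (iii) complementary slackness
    (hcs₁ : δ * (S.trace.re - P) = 0)
    (hcs₂ : ∀ i, γ i * (quadForm (h i) S - Γ i) = 0) :
    ∀ S' : Matrix (Fin N) (Fin N) ℂ, S'.PosSemidef → S'.trace.re ≤ P →
      (∀ i, quadForm (h i) S' ≤ Γ i) →
      detVal Hs S' ≤ detVal Hs S := by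
  intro S' hS' htr' hit'
  set A := 1 + Hs.conjTranspose * S * Hs with hAdef
  set A' := 1 + Hs.conjTranspose * S' * Hs with hA'def
  have hA : A.PosDef := Matrix.PosDef.add_posSemidef Matrix.PosDef.one
    (hS.conjTranspose_mul_mul_same Hs)
  have hA' : A'.PosDef := Matrix.PosDef.add_posSemidef Matrix.PosDef.one
    (hS'.conjTranspose_mul_mul_same Hs)
  have hdim : A.det.im = 0 ∧ 0 < A.det.re := by
    have hp := hA.det_pos; rw [Complex.lt_def] at hp
    exact ⟨by simpa using hp.2.symm, by simpa using hp.1⟩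
  -- key complex identity
  have key : ∀ T : Matrix (Fin N) (Fin N) ℂ,
      A.det * (A⁻¹ * (Hs.conjTranspose * T * Hs)).trace =
        (δ : ℂ) * T.trace + ∑ i, (γ i : ℂ) * (star (h i) ⬝ᵥ T *ᵥ h i) := by
    intro T
    have h1 : A⁻¹ * (Hs.conjTranspose * T * Hs) = (A⁻¹ * Hs.conjTranspose * T) * Hs := by
      simp only [Matrix.mul_assoc]
    rw [h1, Matrix.trace_mul_comm]
    have h2 : Hs * (A⁻¹ * Hs.conjTranspose * T) = (Hs * A⁻¹ * Hs.conjTranspose) * T := by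
      simp only [Matrix.mul_assoc]
    rw [h2, ← smul_eq_mul, ← Matrix.trace_smul, ← Matrix.smul_mul, hstat, Matrix.add_mul, Matrix.trace_add, Finset.sum_mul,
      Matrix.trace_sum, Matrix.smul_mul, Matrix.one_mul, Matrix.trace_smul]
    simp only [Matrix.smul_mul, Matrix.trace_smul, trace_vecMulVec_mul,
      smul_eq_mul]
  -- real version
  have keyre : ∀ T : Matrix (Fin N) (Fin N) ℂ,
      A.det.re * ((A⁻¹ * (Hs.conjTranspose * T * Hs)).trace).re =
        δ * T.trace.re + ∑ i, γ i * quadForm (h i) T := by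
    intro T
    have hk := congrArg Complex.re (key T)
    rw [Complex.mul_re, hdim.1] at hk
    simp only [Complex.add_re, Complex.mul_re, Complex.ofReal_re, Complex.ofReal_im,
      Complex.re_sum, zero_mul, sub_zero] at hk
    rw [hk]
    simp [quadForm]
  -- compare traces
  have hcomp : ((A⁻¹ * (Hs.conjTranspose * S' * Hs)).trace).re ≤
      ((A⁻¹ * (Hs.conjTranspose * S * Hs)).trace).re := by
    have hle : δ * S'.trace.re + ∑ i, γ i * quadForm (h i) S' ≤
        δ * S.trace.re + ∑ i, γ i * quadForm (h i) S := by
      have h1 : δ * S'.trace.re ≤ δ * S.trace.re := by nlinarith [hcs₁]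
      have h2 : ∑ i, γ i * quadForm (h i) S' ≤ ∑ i, γ i * quadForm (h i) S := by
        refine Finset.sum_le_sum fun i _ => ?_
        nlinarith [hcs₂ i, hγ i, hit' i]
      linarith
    rw [← keyre S, ← keyre S'] at hle
    exact le_of_mul_le_mul_left hle hdim.2
  -- trace bound for det_le_of_trace_le
  have hAinvA : A⁻¹ * A = 1 :=
    Matrix.nonsing_inv_mul A (isUnit_iff_ne_zero.mpr hA.det_pos.ne')
  have hbound : ((A⁻¹ * A').trace).re ≤ (Fintype.card (Fin M) : ℝ) := by
    have e1 : A⁻¹ * A' = A⁻¹ + A⁻¹ * (Hs.conjTranspose * S' * Hs) := by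
      rw [hA'def, Matrix.mul_add, Matrix.mul_one]
    have e2 : A⁻¹ * A = A⁻¹ + A⁻¹ * (Hs.conjTranspose * S * Hs) := by
      rw [hAdef, Matrix.mul_add, Matrix.mul_one]
    have e3 : ((A⁻¹ * A).trace).re = (Fintype.card (Fin M) : ℝ) := by
      rw [hAinvA, Matrix.trace_one]; simp
    rw [e1, Matrix.trace_add, Complex.add_re]
    rw [e2, Matrix.trace_add, Complex.add_re] at e3
    linarith
  have := det_le_of_trace_le hA hA'.posSemidef hbound
  simpa [detVal, hAdef, hA'def] using this
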